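/- arXiv:2005.01904 — 3 statements merged into one kernel-verified Lean document; each statement's English description precedes it below -/
import Mathlib

section
/- Let V(t,x,y) = μ(x−y)² exp(∫_t^T 2r(h)dh) − y exp(∫_t^T r(h)dh) − (1/(4μ))∫_t^T β(h)dh. Then V(T,x,y) = μ(x−y)² − y for all x,y ∈ ℝ, and for every t ∈ [0,T] and x,y ∈ ℝ the section t' ↦ V(t',x,y) is differentiable at t, the section x' ↦ V(t,x',y) is twice differentiable at x, the section y' ↦ V(t,x,y') is differentiable at y, and the Hamilton–Jacobi–Bellman equation holds: ∂_t V(t,x,y) = − inf_{π ∈ ℝⁿ} [ ∂_x V(t,x,y)·(r(t)x + γ(t)⋅π) + ∂_y V(t,x,y)·(r(t)y + γ(t)⋅π) + (1/2)·∂²_{xx}V(t,x,y)·(π ⋅ (σ(t)σ(t)ᵀ)π) ]. -/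
open Matrix


lemma my_quad_inf {n : ℕ} (M : Matrix (Fin n) (Fin n) ℝ) (hM : M.PosDef)
    (g : Fin n → ℝ) (b c a : ℝ) (ha : 0 < a) :
    ⨅ π : Fin n → ℝ, (c + b * (g ⬝ᵥ π) + a * (π ⬝ᵥ M *ᵥ π))
      = c - b^2/(4*a) * (g ⬝ᵥ M⁻¹ *ᵥ g) := by
  classical
  have hMT : Mᵀ = M := hM.isHermitian.eq
  have hsym : ∀ u v : Fin n → ℝ, u ⬝ᵥ M *ᵥ v = v ⬝ᵥ M *ᵥ u := by
    intro u v
    rw [Matrix.dotProduct_mulVec, ← Matrix.mulVec_transpose, hMT, dotProduct_comm]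
  set w : Fin n → ℝ := M⁻¹ *ᵥ g with hw
  have hMw : M *ᵥ w = g := by
    rw [hw, Matrix.mulVec_mulVec, Matrix.mul_nonsing_inv _ hM.det_pos.ne'.isUnit,
      Matrix.one_mulVec]
  set π₀ : Fin n → ℝ := (-(b/(2*a))) • w with hπ₀
  have hMπ₀ : M *ᵥ π₀ = (-(b/(2*a))) • g := by rw [hπ₀, Matrix.mulVec_smul, hMw]
  have nonneg : ∀ v : Fin n → ℝ, 0 ≤ v ⬝ᵥ M *ᵥ v := by
    intro v
    have := hM.posSemidef.dotProduct_mulVec_nonneg v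
    simpa using this
  have key : ∀ π : Fin n → ℝ, c + b * (g ⬝ᵥ π) + a * (π ⬝ᵥ M *ᵥ π)
      = a * ((π - π₀) ⬝ᵥ M *ᵥ (π - π₀)) + (c - b^2/(4*a) * (g ⬝ᵥ w)) := by
    intro π
    have e1 : (π - π₀) ⬝ᵥ M *ᵥ (π - π₀)
        = π ⬝ᵥ M *ᵥ π - 2*(π ⬝ᵥ M *ᵥ π₀) + π₀ ⬝ᵥ M *ᵥ π₀ := by
      rw [Matrix.mulVec_sub, dotProduct_sub, sub_dotProduct,
        sub_dotProduct, hsym π₀ π]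
      ring
    have e2 : π ⬝ᵥ M *ᵥ π₀ = -(b/(2*a)) * (g ⬝ᵥ π) := by
      rw [hMπ₀, dotProduct_smul, smul_eq_mul, dotProduct_comm]
    have e3 : π₀ ⬝ᵥ M *ᵥ π₀ = (b/(2*a))^2 * (g ⬝ᵥ w) := by
      rw [hMπ₀, dotProduct_smul, smul_eq_mul, hπ₀, smul_dotProduct,
        smul_eq_mul, dotProduct_comm]
      ring
    rw [e1, e2, e3]
    field_simp
    ring
  have hmin : c + b * (g ⬝ᵥ π₀) + a * (π₀ ⬝ᵥ M *ᵥ π₀)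
      = c - b^2/(4*a) * (g ⬝ᵥ w) := by
    rw [key π₀]
    simp
  apply le_antisymm
  · calc ⨅ π : Fin n → ℝ, (c + b * (g ⬝ᵥ π) + a * (π ⬝ᵥ M *ᵥ π))
        ≤ c + b * (g ⬝ᵥ π₀) + a * (π₀ ⬝ᵥ M *ᵥ π₀) := by
          refine ciInf_le ⟨c - b^2/(4*a) * (g ⬝ᵥ w), ?_⟩ π₀
          rintro v ⟨π, rfl⟩
          simp only [key]
          nlinarith [nonneg (π - π₀)]
      _ = c - b^2/(4*a) * (g ⬝ᵥ w) := hmin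
  · apply le_ciInf
    intro π
    simp only [key]
    nlinarith [nonneg (π - π₀)]

lemma my_sec_x (μ y A B C : ℝ) (u : ℝ) :
    HasDerivAt (fun x' : ℝ => μ * (x' - y)^2 * A - y * B - C) (2*μ*(u-y)*A) u := by
  have h1 : HasDerivAt (fun x' : ℝ => (x' - y)^2) (2*(u-y)) u := by
    simpa using ((hasDerivAt_id u).sub_const y).fun_pow 2
  have h3 := (((h1.const_mul μ).mul_const A).sub_const (y * B)).sub_const C
  exact h3.congr_deriv (by ring)

lemma my_sec_y (μ x A B C : ℝ) (u : ℝ) :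
    HasDerivAt (fun y' : ℝ => μ * (x - y')^2 * A - y' * B - C) (-(2*μ*(x-u)*A) - B) u := by
  have h1 : HasDerivAt (fun y' : ℝ => (x - y')^2) (2*(x-u)*(-1)) u := by
    have := ((hasDerivAt_id u).const_sub x).fun_pow 2
    simpa using this
  have h3 := (((h1.const_mul μ).mul_const A).sub ((hasDerivAt_id u).mul_const B)).sub_const C
  exact h3.congr_deriv (by ring)

lemma my_int_deriv {f : ℝ → ℝ} {T t : ℝ} (hf : ContinuousOn f (Set.Icc 0 T))
    (ht : t ∈ Set.Icc 0 T) :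
    HasDerivWithinAt (fun u => ∫ h in u..T, f h) (-f t) (Set.Icc 0 T) t := by
  haveI : Fact (t ∈ Set.Icc (0:ℝ) T) := ⟨ht⟩
  have hsub : Set.uIcc t T ⊆ Set.Icc 0 T := by
    rw [Set.uIcc_of_le ht.2]
    exact Set.Icc_subset_Icc ht.1 le_rfl
  have hint : IntervalIntegrable f MeasureTheory.volume t T :=
    (hf.mono hsub).intervalIntegrable
  exact intervalIntegral.integral_hasDerivWithinAt_left hint
    (hf.stronglyMeasurableAtFilter_nhdsWithin measurableSet_Icc t)
    (hf t ht)

/-- The explicit function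
`V(t,x,y) = μ(x−y)² exp(∫_t^T 2r) − y exp(∫_t^T r) − (1/(4μ))∫_t^T β`
satisfies the terminal condition `V(T,x,y) = μ(x−y)² − y`, its one-variable
sections are (twice) differentiable, and it solves the HJB equation. -/
theorem hjb_explicit_solution
    (T : ℝ) (hT : 0 < T) (n d : ℕ) (hn : 1 ≤ n) (hd : 1 ≤ d)
    (r : ℝ → ℝ) (γ : ℝ → Fin n → ℝ) (σ : ℝ → Matrix (Fin n) (Fin d) ℝ)
    (hr : ContinuousOn r (Set.Icc 0 T)) (hγ : ContinuousOn γ (Set.Icc 0 T))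
    (hσ : ContinuousOn σ (Set.Icc 0 T))
    (hpd : ∀ t ∈ Set.Icc (0:ℝ) T, (σ t * (σ t)ᵀ).PosDef)
    (μ : ℝ) (hμ : 0 < μ)
    (β : ℝ → ℝ) (hβ : ∀ t, β t = γ t ⬝ᵥ (σ t * (σ t)ᵀ)⁻¹ *ᵥ γ t)
    (V : ℝ → ℝ → ℝ → ℝ)
    (hV : ∀ t x y, V t x y
        = μ * (x - y)^2 * Real.exp (∫ h in t..T, 2 * r h)
          - y * Real.exp (∫ h in t..T, r h)
          - (1/(4*μ)) * ∫ h in t..T, β h) :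
    (∀ x y : ℝ, V T x y = μ * (x - y)^2 - y) ∧
    ∀ t ∈ Set.Icc (0:ℝ) T, ∀ x y : ℝ,
      DifferentiableWithinAt ℝ (fun t' => V t' x y) (Set.Icc 0 T) t ∧
      DifferentiableAt ℝ (fun x' => V t x' y) x ∧
      DifferentiableAt ℝ (deriv (fun x' => V t x' y)) x ∧
      DifferentiableAt ℝ (fun y' => V t x y') y ∧
      derivWithin (fun t' => V t' x y) (Set.Icc 0 T) t =
        - ⨅ π : Fin n → ℝ,
          (deriv (fun x' => V t x' y) x * (r t * x + γ t ⬝ᵥ π)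
            + deriv (fun y' => V t x y') y * (r t * y + γ t ⬝ᵥ π)
            + (1/2) * deriv (deriv (fun x' => V t x' y)) x
                * (π ⬝ᵥ (σ t * (σ t)ᵀ) *ᵥ π)) := by
  classical
  constructor
  · intro x y
    rw [hV]
    simp
  intro t ht x y
  -- continuity of β
  have hMc : ContinuousOn (fun u => σ u * (σ u)ᵀ) (Set.Icc 0 T) := by
    have h : Continuous (fun p : Matrix (Fin n) (Fin d) ℝ × Matrix (Fin n) (Fin d) ℝ =>
        p.1 * p.2ᵀ) := continuous_fst.matrix_mul continuous_snd.matrix_transpose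
    exact h.comp_continuousOn (hσ.prodMk hσ)
  have hdetc : ContinuousOn (fun u => (σ u * (σ u)ᵀ).det) (Set.Icc 0 T) :=
    (continuous_id.matrix_det).comp_continuousOn hMc
  have hdetne : ∀ u ∈ Set.Icc (0:ℝ) T, (σ u * (σ u)ᵀ).det ≠ 0 :=
    fun u hu => (hpd u hu).det_pos.ne'
  have hinvc : ContinuousOn (fun u => (σ u * (σ u)ᵀ)⁻¹) (Set.Icc 0 T) := by
    have heq : ∀ u, (σ u * (σ u)ᵀ)⁻¹
        = ((σ u * (σ u)ᵀ).det)⁻¹ • (σ u * (σ u)ᵀ).adjugate := by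
      intro u
      rw [Matrix.inv_def, Ring.inverse_eq_inv']
    simp only [heq]
    exact (hdetc.inv₀ hdetne).smul ((continuous_id.matrix_adjugate).comp_continuousOn hMc)
  have hβc : ContinuousOn β (Set.Icc 0 T) := by
    have h2 : Continuous (fun p : (Fin n → ℝ) × (Matrix (Fin n) (Fin n) ℝ × (Fin n → ℝ)) =>
        p.1 ⬝ᵥ p.2.1 *ᵥ p.2.2) :=
      continuous_fst.dotProduct ((continuous_fst.comp continuous_snd).matrix_mulVec
        (continuous_snd.comp continuous_snd))
    have h3 : ContinuousOn (fun u => γ u ⬝ᵥ (σ u * (σ u)ᵀ)⁻¹ *ᵥ γ u) (Set.Icc 0 T) :=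
      h2.comp_continuousOn (hγ.prodMk (hinvc.prodMk hγ))
    exact h3.congr (fun u _ => hβ u)
  have h2r : ContinuousOn (fun h => 2 * r h) (Set.Icc 0 T) := continuousOn_const.mul hr
  set A := Real.exp (∫ h in t..T, 2 * r h) with hA_def
  set B := Real.exp (∫ h in t..T, r h) with hB_def
  have hA : 0 < A := Real.exp_pos _
  have hB : 0 < B := Real.exp_pos _
  have hAB : A = B^2 := by
    rw [hA_def, hB_def, sq, ← Real.exp_add, ← two_mul, ← intervalIntegral.integral_const_mul]
  -- x derivatives
  have hx : ∀ u : ℝ, HasDerivAt (fun x' => V t x' y) (2*μ*(u-y)*A) u := by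
    intro u
    simp only [hV]
    exact my_sec_x μ y A B _ u
  have hdx : deriv (fun x' => V t x' y) = fun u => 2*μ*(u-y)*A :=
    funext fun u => (hx u).deriv
  have hx2 : ∀ u : ℝ, HasDerivAt (fun u : ℝ => 2*μ*(u-y)*A) (2*μ*A) u := by
    intro u
    have h := (((hasDerivAt_id u).sub_const y).const_mul (2*μ)).mul_const A
    exact h.congr_deriv (by ring)
  have hdxx : deriv (deriv (fun x' => V t x' y)) x = 2*μ*A := by
    rw [hdx]
    exact (hx2 x).deriv
  -- y derivative
  have hy : HasDerivAt (fun y' => V t x y') (-(2*μ*(x-y)*A) - B) y := by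
    simp only [hV]
    exact my_sec_y μ x A B _ y
  -- t derivative
  have hE2 : HasDerivWithinAt (fun t' => Real.exp (∫ h in t'..T, 2 * r h))
      (A * -(2 * r t)) (Set.Icc 0 T) t := by
    have := (my_int_deriv h2r ht).exp
    simpa [hA_def] using this
  have hE1 : HasDerivWithinAt (fun t' => Real.exp (∫ h in t'..T, r h))
      (B * -(r t)) (Set.Icc 0 T) t := by
    have := (my_int_deriv hr ht).exp
    simpa [hB_def] using this
  have hI : HasDerivWithinAt (fun t' => ∫ h in t'..T, β h) (-(β t)) (Set.Icc 0 T) t :=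
    my_int_deriv hβc ht
  have hVt : HasDerivWithinAt (fun t' => V t' x y)
      (μ*(x-y)^2 * (A * -(2 * r t)) - y * (B * -(r t)) - (1/(4*μ)) * -(β t))
      (Set.Icc 0 T) t := by
    simp only [hV]
    exact ((hE2.const_mul (μ*(x-y)^2)).sub (hE1.const_mul y)).sub (hI.const_mul (1/(4*μ)))
  refine ⟨hVt.differentiableWithinAt, (hx x).differentiableAt, ?_, hy.differentiableAt, ?_⟩
  · rw [hdx]
    exact (hx2 x).differentiableAt
  rw [hVt.derivWithin (uniqueDiffOn_Icc hT t ht)]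
  have hdxx2 : deriv (fun u : ℝ => 2*μ*(u-y)*A) x = 2*μ*A := (hx2 x).deriv
  simp only [hdx, hy.deriv, hdxx2]
  have hcong : ∀ π : Fin n → ℝ,
      2*μ*(x-y)*A * (r t * x + γ t ⬝ᵥ π)
        + (-(2*μ*(x-y)*A) - B) * (r t * y + γ t ⬝ᵥ π)
        + 1/2 * (2*μ*A) * (π ⬝ᵥ (σ t * (σ t)ᵀ) *ᵥ π)
      = (2*μ*(x-y)*A * (r t * x) + (-(2*μ*(x-y)*A) - B) * (r t * y))
        + (-B) * (γ t ⬝ᵥ π) + (μ*A) * (π ⬝ᵥ (σ t * (σ t)ᵀ) *ᵥ π) := by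
    intro π
    ring
  rw [iInf_congr hcong, my_quad_inf (σ t * (σ t)ᵀ) (hpd t ht) (γ t) (-B) _ (μ*A)
    (by positivity), ← hβ t]
  rw [hAB]
  have hBne : B ≠ 0 := hB.ne'
  field_simp
  ring
end

section
/- Let V(t,x,y) = μ(x−y)² exp(∫_t^T 2r(h)dh) − y exp(∫_t^T r(h)dh) − (1/(4μ))∫_t^T β(h)dh. For every t ∈ [0,T] and x,y ∈ ℝ, the vector π*(t) := (1/(2μ)) exp(−∫_t^T r(h)dh) (σ(t)σ(t)ᵀ)⁻¹ γ(t)ᵀ is the unique minimizer over π ∈ ℝⁿ of the Hamiltonian π ↦ ∂_x V(t,x,y)·(r(t)x + γ(t)⋅π) + ∂_y V(t,x,y)·(r(t)y + γ(t)⋅π) + (1/2)·∂²_{xx}V(t,x,y)·(π ⋅ (σ(t)σ(t)ᵀ)π), and the minimum value equals ∂_x V(t,x,y)·r(t)x + ∂_y V(t,x,y)·r(t)y − β(t)/(4μ). -/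
open Matrix

/-- the vector `π*(t) = (1/(2μ)) e^{−∫_t^T r} (σσᵀ)⁻¹γᵀ` is the unique
minimizer of the Hamiltonian built from the derivatives of the sections of `V`, and the
minimum value equals `∂_x V · r t x + ∂_y V · r t y − β(t)/(4μ)`. -/
theorem unique_minimizer_of_hamiltonian
    (T : ℝ) (hT : 0 < T) (n d : ℕ) (hn : 1 ≤ n) (hd : 1 ≤ d)
    (r : ℝ → ℝ) (γ : ℝ → Fin n → ℝ) (σ : ℝ → Matrix (Fin n) (Fin d) ℝ)
    (hr : ContinuousOn r (Set.Icc 0 T)) (hγ : ContinuousOn γ (Set.Icc 0 T))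
    (hσ : ContinuousOn σ (Set.Icc 0 T))
    (hpd : ∀ t ∈ Set.Icc (0:ℝ) T, (σ t * (σ t)ᵀ).PosDef)
    (μ : ℝ) (hμ : 0 < μ)
    (β : ℝ → ℝ) (hβ : ∀ t, β t = γ t ⬝ᵥ (σ t * (σ t)ᵀ)⁻¹ *ᵥ γ t)
    (V : ℝ → ℝ → ℝ → ℝ)
    (hV : ∀ t x y, V t x y
        = μ * (x - y)^2 * Real.exp (∫ h in t..T, 2 * r h)
          - y * Real.exp (∫ h in t..T, r h)
          - (1/(4*μ)) * ∫ h in t..T, β h)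
    (t : ℝ) (ht : t ∈ Set.Icc (0:ℝ) T) (x y : ℝ)
    (H : (Fin n → ℝ) → ℝ)
    (hH : ∀ π : Fin n → ℝ, H π
        = deriv (fun x' => V t x' y) x * (r t * x + γ t ⬝ᵥ π)
          + deriv (fun y' => V t x y') y * (r t * y + γ t ⬝ᵥ π)
          + (1/2) * deriv (deriv (fun x' => V t x' y)) x
              * (π ⬝ᵥ (σ t * (σ t)ᵀ) *ᵥ π))
    (πstar : Fin n → ℝ)
    (hπstar : πstar
        = ((1/(2*μ)) * Real.exp (-(∫ h in t..T, r h))) • ((σ t * (σ t)ᵀ)⁻¹ *ᵥ γ t)) :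
    (∀ π : Fin n → ℝ, H πstar ≤ H π) ∧
    (∀ π : Fin n → ℝ, H π = H πstar → π = πstar) ∧
    H πstar = deriv (fun x' => V t x' y) x * (r t * x)
        + deriv (fun y' => V t x y') y * (r t * y) - β t / (4*μ) := by
  have hApd := hpd t ht
  set A := σ t * (σ t)ᵀ with hAdef
  set g := γ t with hg
  set I := ∫ h in t..T, r h with hIdef
  set E := Real.exp I with hEdef
  set K := (1/(4*μ)) * ∫ h in t..T, β h with hKdef
  set c := (1/(2*μ)) * E⁻¹ with hcdef
  have hE0 : E ≠ 0 := Real.exp_ne_zero I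
  have hE2 : Real.exp (∫ h in t..T, 2 * r h) = E^2 := by
    rw [intervalIntegral.integral_const_mul, hEdef, ← Real.exp_nat_mul]
    norm_num
    rfl
  -- the sections of V
  have hsecx : (fun x' => V t x' y) = fun x' => μ*(x'-y)^2*(E^2) - y*E - K := by
    funext x'; rw [hV, hE2]
  have hsecy : (fun y' => V t x y') = fun y' => μ*(x-y')^2*(E^2) - y'*E - K := by
    funext y'; rw [hV, hE2]
  -- first derivative in x
  have hDx : deriv (fun x' => V t x' y) x = 2*μ*(x-y)*E^2 := by
    rw [hsecx]
    have h1 : ∀ z : ℝ, HasDerivAt (fun x' : ℝ => μ*(x'-y)^2*(E^2) - y*E - K)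
        (μ*(2*(z-y))*E^2) z := by
      intro z
      have h0 : HasDerivAt (fun x' : ℝ => (x'-y)^2) (2*(z-y)) z := by
        simpa using ((hasDerivAt_id z).sub_const y).fun_pow 2
      exact (((h0.const_mul μ).mul_const (E^2)).sub_const (y*E)).sub_const K
    rw [(h1 x).deriv]; ring
  -- second derivative in x
  have hDxx : deriv (deriv (fun x' => V t x' y)) x = 2*μ*E^2 := by
    have hfun : deriv (fun x' => V t x' y) = fun z => μ*(2*(z-y))*E^2 := by
      funext z
      rw [hsecx]
      have h0 : HasDerivAt (fun x' : ℝ => (x'-y)^2) (2*(z-y)) z := by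
        simpa using ((hasDerivAt_id z).sub_const y).fun_pow 2
      exact ((((h0.const_mul μ).mul_const (E^2)).sub_const (y*E)).sub_const K).deriv
    rw [hfun]
    have h2 : HasDerivAt (fun z : ℝ => μ*(2*(z-y))*E^2) (μ*(2*1)*E^2) x := by
      have : HasDerivAt (fun z : ℝ => z - y) 1 x := (hasDerivAt_id x).sub_const y
      exact ((this.const_mul 2).const_mul μ).mul_const (E^2)
    rw [h2.deriv]; ring
  -- first derivative in y
  have hDy : deriv (fun y' => V t x y') y = -(2*μ*(x-y)*E^2) - E := by
    rw [hsecy]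
    have h0 : HasDerivAt (fun y' : ℝ => (x-y')^2) (2*(x-y)*(-1)) y := by
      simpa using ((hasDerivAt_id y).const_sub x).fun_pow 2
    have h2 : HasDerivAt (fun y' : ℝ => y'*E) E y := by
      simpa using (hasDerivAt_id y).mul_const E
    have h3 : HasDerivAt (fun y' : ℝ => μ*(x-y')^2*(E^2) - y'*E - K)
        (μ*(2*(x-y)*(-1))*E^2 - E) y :=
      (((h0.const_mul μ).mul_const (E^2)).sub h2).sub_const K
    rw [h3.deriv]; ring
  -- matrix facts
  have hsymm : Aᵀ = A := by simp [hAdef, Matrix.transpose_mul]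
  have hAinv : A * A⁻¹ = 1 := Matrix.mul_nonsing_inv A (by simp [hApd.det_pos.ne'])
  have hπA : A *ᵥ πstar = c • g := by
    rw [hπstar, Real.exp_neg, Matrix.mulVec_smul, Matrix.mulVec_mulVec, hAinv,
      Matrix.one_mulVec, ← hEdef, ← hcdef]
  have hdotsym : ∀ v w : Fin n → ℝ, v ⬝ᵥ A *ᵥ w = (A *ᵥ v) ⬝ᵥ w := by
    intro v w; rw [Matrix.dotProduct_mulVec, ← Matrix.mulVec_transpose, hsymm]
  have hβc : g ⬝ᵥ πstar = c * β t := by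
    rw [hπstar, Real.exp_neg, ← hEdef, ← hcdef, dotProduct_smul, hβ, ← hg,
      dotProduct_comm, smul_eq_mul]
  -- expansion of the quadratic form
  have hquad : ∀ π : Fin n → ℝ, (π - πstar) ⬝ᵥ A *ᵥ (π - πstar)
      = π ⬝ᵥ A *ᵥ π - 2*c*(g ⬝ᵥ π) + c^2 * β t := by
    intro π
    have h1 : πstar ⬝ᵥ A *ᵥ π = c * (g ⬝ᵥ π) := by
      rw [hdotsym, hπA, smul_dotProduct, smul_eq_mul]
    have h2 : π ⬝ᵥ A *ᵥ πstar = c * (g ⬝ᵥ π) := by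
      rw [hπA, dotProduct_smul, smul_eq_mul, dotProduct_comm]
    have h3 : πstar ⬝ᵥ A *ᵥ πstar = c^2 * β t := by
      rw [hπA, dotProduct_smul, smul_eq_mul, dotProduct_comm, hβc]; ring
    rw [Matrix.mulVec_sub, dotProduct_sub, sub_dotProduct, sub_dotProduct, h1, h2, h3]
    ring
  -- key identity
  have key : ∀ π : Fin n → ℝ, H π
      = 2*μ*(x-y)*E^2 * (r t * x) + (-(2*μ*(x-y)*E^2) - E) * (r t * y) - β t / (4*μ)
        + (μ*E^2) * ((π - πstar) ⬝ᵥ A *ᵥ (π - πstar)) := by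
    intro π
    rw [hH π, hDx, hDy, hDxx, hquad π, hcdef]
    field_simp
    ring
  have hq0 : (πstar - πstar) ⬝ᵥ A *ᵥ (πstar - πstar) = 0 := by
    simp [sub_self]
  have hqnn : ∀ π : Fin n → ℝ, 0 ≤ (π - πstar) ⬝ᵥ A *ᵥ (π - πstar) := by
    intro π
    rcases eq_or_ne π πstar with h | h
    · simp [h]
    · have := hApd.dotProduct_mulVec_pos (x := π - πstar) (sub_ne_zero.2 h)
      simpa using this.le
  have hμE : 0 < μ * E^2 := by positivity
  refine ⟨?_, ?_, ?_⟩
  · intro π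
    rw [key π, key πstar, hq0]
    have := hqnn π
    nlinarith
  · intro π hπ
    by_contra hne
    have hpos : 0 < (π - πstar) ⬝ᵥ A *ᵥ (π - πstar) := by
      have := hApd.dotProduct_mulVec_pos (x := π - πstar) (sub_ne_zero.2 hne)
      simpa using this
    rw [key π, key πstar, hq0] at hπ
    nlinarith
  · rw [key πstar, hq0, hDx, hDy]
    ring
end

section
/- Let r, b, σ, α, μ, S, T be real numbers with b > r > 0, σ > 0, μ > 0, S > 1, and let s < T. Define the game-theoretic strategy π*₂(s) = (b−r)/(2μσ²S^{2α}) − (1/(2μ))·((b−r)/(σS^{α}))²·((e^{−2αr(T−s)} − 1)/r)·e^{−r(T−s)} and the dynamic optimal strategy π*(s) = (b−r)/(2μσ²S^{2α}). Then: (i) if α = 0 then π*₂(s) = π*(s); (ii) if α > 0 then π*₂(s) > π*(s); (iii) if α < 0 then π*₂(s) < π*(s). -/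
/-- CEV model comparison: comparing the game-theoretic strategy `π*₂(s)`
with the dynamic optimal strategy `π*(s) = (b−r)/(2μσ²S^{2α})`: they coincide if
`α = 0`, `π*₂ > π*` if `α > 0`, and `π*₂ < π*` if `α < 0`. -/
theorem cev_strategy_comparison
    (r b σ α μ S T s : ℝ)
    (hbr : b > r) (hr : r > 0) (hσ : σ > 0) (hμ : μ > 0) (hS : S > 1) (hsT : s < T)
    (π2 πstar : ℝ)
    (hπ2 : π2 = (b - r) / (2*μ*σ^2*S^(2*α))
        - (1/(2*μ)) * ((b - r)/(σ * S^α))^2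
            * ((Real.exp (-(2*α*r*(T - s))) - 1) / r) * Real.exp (-(r*(T - s))))
    (hπstar : πstar = (b - r) / (2*μ*σ^2*S^(2*α))) :
    (α = 0 → π2 = πstar) ∧ (α > 0 → π2 > πstar) ∧ (α < 0 → π2 < πstar) := by
  have hS0 : (0:ℝ) < S := lt_trans one_pos hS
  have hSa : 0 < S ^ α := Real.rpow_pos_of_pos hS0 α
  have hden : 0 < σ * S ^ α := mul_pos hσ hSa
  have hq : 0 < ((b - r)/(σ * S ^ α))^2 :=
    pow_pos (div_pos (sub_pos.2 hbr) hden) 2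
  have hexp : 0 < Real.exp (-(r*(T - s))) := Real.exp_pos _
  have hc : 0 < (1/(2*μ)) * ((b - r)/(σ * S ^ α))^2 * Real.exp (-(r*(T - s))) / r := by
    positivity
  set c := (1/(2*μ)) * ((b - r)/(σ * S ^ α))^2 * Real.exp (-(r*(T - s))) / r with hcdef
  have hdiff : π2 - πstar = c * (1 - Real.exp (-(2*α*r*(T - s)))) := by
    rw [hπ2, hπstar, hcdef]
    field_simp
    ring
  have hts : 0 < T - s := sub_pos.2 hsT
  refine ⟨?_, ?_, ?_⟩
  · intro h0
    subst h0
    norm_num at hdiff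
    linarith
  · intro hα
    have hx : -(2*α*r*(T - s)) < 0 := by nlinarith [mul_pos (mul_pos hα hr) hts]
    have hE : Real.exp (-(2*α*r*(T - s))) < 1 := Real.exp_lt_one_iff.mpr hx
    nlinarith [mul_pos hc (sub_pos.2 hE)]
  · intro hα
    have hx : 0 < -(2*α*r*(T - s)) := by nlinarith [mul_pos (mul_pos (neg_pos.2 hα) hr) hts]
    have hE : 1 < Real.exp (-(2*α*r*(T - s))) := Real.one_lt_exp_iff.mpr hx
    nlinarith [mul_pos hc (sub_pos.2 (Real.exp_lt_one_iff.mpr (by linarith : -(-(2*α*r*(T - s))) < 0)))]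
end
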